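/- Let F be a field of characteristic zero, E a field extension of F with finrank F E = 2, and N = Algebra.norm F : E → F the field norm. For c ∈ F with c ≠ 0 and an F-linear automorphism g : E ≃ₗ[F] E, the following are equivalent: (i) N(g(x)) = c · N(x) for all x ∈ E and the determinant of g as an F-linear map equals c; (ii) there exists e ∈ E with N(e) = c such that g(x) = e · x for all x ∈ E. In particular, the group of such similitudes (the F-points of GSO(2, η)) is exactly the group of multiplications by elements of E^×, and the similitude character corresponds to the norm map, with image N(E^×). -/

import Mathlib

/-- For a quadratic extension `E/F` of a field of characteristic zero, an `F`-linear
automorphism `g` of `E` is a similitude of the norm form with factor `c` and determinant `c`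
if and only if `g` is multiplication by an element `e ∈ E` of norm `c`.  In particular
`GSO(2, η)(F) ≅ E^×` and the similitude character is the norm map, with image `N(E^×)`. -/
theorem GSO_two_similitudes_are_norm_multiplications
    (F E : Type*) [Field F] [CharZero F] [Field E] [Algebra F E]
    [FiniteDimensional F E] (h2 : Module.finrank F E = 2)
    (c : F) (hc : c ≠ 0) (g : E ≃ₗ[F] E) :
    ((∀ x : E, Algebra.norm F (g x) = c * Algebra.norm F x) ∧
        LinearMap.det g.toLinearMap = c) ↔
    ∃ e : E, Algebra.norm F e = c ∧ ∀ x : E, g x = e * x := by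
  constructor
  · rintro ⟨hN, hdet⟩
    set e : E := g 1 with he
    have hNe : Algebra.norm F e = c := by simpa using hN 1
    have he0 : e ≠ 0 := by
      intro h
      rw [h, Algebra.norm_zero] at hNe
      exact hc hNe.symm
    -- find α with {α, 1} a basis
    obtain ⟨α, hα⟩ : ∃ α : E, α ∉ Submodule.span F ({1} : Set E) := by
      by_contra h
      push_neg at h
      have htop : Submodule.span F ({1} : Set E) = ⊤ := eq_top_iff.mpr fun x _ => h x
      have h1 := finrank_span_singleton (K := F) (one_ne_zero : (1:E) ≠ 0)
      rw [htop, finrank_top, h2] at h1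
      omega
    have hli : LinearIndependent F ![α, (1 : E)] := by
      rw [linearIndependent_fin2]
      refine ⟨by simp, fun a ha => ?_⟩
      apply hα
      rw [Submodule.mem_span_singleton]
      exact ⟨a, by simpa using ha⟩
    let b : Module.Basis (Fin 2) F E :=
      basisOfLinearIndependentOfCardEqFinrank hli (by simp [h2])
    have hb : ⇑b = ![α, (1 : E)] := coe_basisOfLinearIndependentOfCardEqFinrank hli _
    have hb0 : b 0 = α := by rw [hb]; rfl
    have hb1 : b 1 = (1 : E) := by rw [hb]; rfl
    set p : F := b.repr (α * α) 0 with hp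
    set q : F := b.repr (α * α) 1 with hq
    have hαα : α * α = p • α + q • (1 : E) := by
      have := b.sum_repr (α * α)
      rw [Fin.sum_univ_two, hb0, hb1] at this
      exact this.symm
    -- norm formula
    have key : ∀ s t : F, Algebra.norm F (t • (1 : E) + s • α)
        = t * t + p * s * t - q * (s * s) := by
      intro s t
      have e1 : (t • (1 : E) + s • α) * b 1 = s • b 0 + t • b 1 := by
        rw [hb0, hb1, mul_one, add_comm]
      have e0 : (t • (1 : E) + s • α) * b 0 = (p * s + t) • b 0 + (q * s) • b 1 := by
        rw [hb0, hb1, add_mul, smul_mul_assoc, smul_mul_assoc, one_mul, hαα]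
        module
      rw [Algebra.norm_eq_matrix_det b, Matrix.det_fin_two]
      simp only [Algebra.leftMulMatrix_eq_repr_mul, e0, e1, map_add, map_smul,
        b.repr_self, Finsupp.coe_add, Finsupp.coe_smul, Pi.add_apply, Pi.smul_apply,
        Finsupp.single_apply, smul_eq_mul]
      norm_num
      ring
    -- the normalized map h
    set h : E →ₗ[F] E := (Algebra.lmul F E e⁻¹) ∘ₗ g.toLinearMap with hhdef
    have hh : ∀ x : E, h x = e⁻¹ * g x := fun x => rfl
    have hNinv : Algebra.norm F e⁻¹ = c⁻¹ := by
      have h1 : Algebra.norm F e * Algebra.norm F e⁻¹ = 1 := by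
        rw [← map_mul, mul_inv_cancel₀ he0, map_one]
      rw [hNe] at h1
      exact eq_inv_of_mul_eq_one_right h1
    have hNh : ∀ x : E, Algebra.norm F (h x) = Algebra.norm F x := by
      intro x
      rw [hh, map_mul, hNinv, hN x]
      field_simp
    have h1eq : h 1 = 1 := by rw [hh, ← he, inv_mul_cancel₀ he0]
    have hdeth : LinearMap.det h = 1 := by
      rw [hhdef, LinearMap.det_comp, ← Algebra.norm_apply, hNinv, hdet, inv_mul_cancel₀ hc]
    set a : F := b.repr (h α) 0 with ha
    set r : F := b.repr (h α) 1 with hr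
    have hhα : h α = a • α + r • (1 : E) := by
      have := b.sum_repr (h α)
      rw [Fin.sum_univ_two, hb0, hb1] at this
      exact this.symm
    have hdeta : LinearMap.det h = a := by
      rw [← LinearMap.det_toMatrix b, Matrix.det_fin_two]
      have m00 : LinearMap.toMatrix b b h 0 0 = a := by
        rw [LinearMap.toMatrix_apply, hb0]
      have m10 : LinearMap.toMatrix b b h 1 0 = r := by
        rw [LinearMap.toMatrix_apply, hb0]
      have m01 : LinearMap.toMatrix b b h 0 1 = 0 := by
        rw [LinearMap.toMatrix_apply, hb1, h1eq, ← hb1, b.repr_self]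
        simp
      have m11 : LinearMap.toMatrix b b h 1 1 = 1 := by
        rw [LinearMap.toMatrix_apply, hb1, h1eq, ← hb1, b.repr_self]
        simp
      rw [m00, m01, m10, m11]
      ring
    have ha1 : a = 1 := by rw [← hdeta, hdeth]
    -- norm equations force r = 0
    have hNα : Algebra.norm F α = -q := by
      have := key 1 0
      simpa using this
    have e1 : r * r + p * r - q = -q := by
      have h1 := hNh α
      rw [hhα, ha1, one_smul, add_comm] at h1
      have h2' := key 1 r
      rw [one_smul] at h2'
      rw [h2'] at h1
      rw [hNα] at h1
      linear_combination h1
    have e2 : (1 + r) * (1 + r) + p * (1 + r) - q = 1 + p - q := by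
      have h1 := hNh (1 + α)
      have hl : h (1 + α) = (1 + r) • (1 : E) + (1 : F) • α := by
        rw [map_add, h1eq, hhα, ha1]
        module
      have hrr : (1 : E) + α = (1 : F) • (1 : E) + (1 : F) • α := by simp
      rw [hl, hrr, key 1 (1 + r), key 1 1] at h1
      linear_combination h1
    have hr0 : r = 0 := by
      have h2r : 2 * r = 0 := by linear_combination e2 - e1
      rcases mul_eq_zero.mp h2r with h' | h'
      · exact absurd h' two_ne_zero
      · exact h'
    have hαeq : h α = α := by rw [hhα, ha1, hr0, one_smul, zero_smul, add_zero]
    have hid : ∀ x : E, h x = x := by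
      intro x
      have hx := b.sum_repr x
      rw [Fin.sum_univ_two, hb0, hb1] at hx
      calc h x = h (b.repr x 0 • α + b.repr x 1 • 1) := by rw [hx]
        _ = b.repr x 0 • h α + b.repr x 1 • h 1 := by rw [map_add, map_smul, map_smul]
        _ = x := by rw [hαeq, h1eq, hx]
    refine ⟨e, hNe, fun x => ?_⟩
    have := hid x
    rw [hh] at this
    rwa [inv_mul_eq_iff_eq_mul₀ he0] at this
  · rintro ⟨e, hNe, hg⟩
    constructor
    · intro x
      rw [hg x, map_mul, hNe]
    · have heq : g.toLinearMap = Algebra.lmul F E e := by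
        ext x
        simpa using hg x
      rw [heq, ← Algebra.norm_apply]
      exact hNe
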